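/- Fix ε ∈ (0,1), let c = 2/(1 - ln 2), and define n(m) = ⌈c·m·(ln(2m) - ln ε)⌉ for m ≥ 1. Then for every integer m ≥ 1, ∑_{k=1}^{m} n(k)/(k+1) ≥ (1/2)·n(m) - 2c. -/

import Mathlib

theorem cost_sum_lower (ε : ℝ) (hε : ε ∈ Set.Ioo (0:ℝ) 1) (c : ℝ)
    (hc : c = 2 / (1 - Real.log 2)) (n : ℕ → ℕ)
    (hn : ∀ m : ℕ, 1 ≤ m → n m = ⌈c * m * (Real.log (2 * m) - Real.log ε)⌉₊)
    (m : ℕ) (hm : 1 ≤ m) :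
    (1 / 2) * (n m : ℝ) - 2 * c ≤ ∑ k ∈ Finset.Icc 1 m, (n k : ℝ) / ((k : ℝ) + 1) := by
  obtain ⟨hε0, hε1⟩ := hε
  have hlogε : Real.log ε < 0 := Real.log_neg hε0 hε1
  have hl2 : Real.log 2 < 0.6931471808 := Real.log_two_lt_d9
  have hl2' : (0.6931471803:ℝ) < Real.log 2 := Real.log_two_gt_d9
  have hc_pos : 0 < c := by
    rw [hc]; apply div_pos (by norm_num); linarith
  have hc2 : 2 ≤ c := by
    rw [hc, le_div_iff₀ (by linarith : (0:ℝ) < 1 - Real.log 2)]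
    nlinarith
  set e := Real.log ε with he
  have hnF : ∀ k : ℕ, 1 ≤ k → c * k * (Real.log (2*k) - e) ≤ (n k : ℝ) := by
    intro k hk
    rw [hn k hk]
    exact Nat.le_ceil _
  have hFnn : ∀ k : ℕ, 1 ≤ k → 0 ≤ c * k * (Real.log (2*k) - e) := by
    intro k hk
    have h1 : (1:ℝ) ≤ 2*k := by
      have : (1:ℝ) ≤ (k:ℝ) := by exact_mod_cast hk
      linarith
    have hln := Real.log_nonneg h1
    have hk0 : (0:ℝ) ≤ k := Nat.cast_nonneg k
    exact mul_nonneg (mul_nonneg hc_pos.le hk0) (by linarith)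
  have h4log : Real.log 4 = 2 * Real.log 2 := by
    rw [show (4:ℝ) = 2^(2:ℕ) by norm_num, Real.log_pow]; norm_num
  have key : ∀ m : ℕ, 2 ≤ m →
      ((m:ℝ)+1) * Real.log (2*((m:ℝ)+1)) ≤ ((m:ℝ)+2) * Real.log (2*(m:ℝ)) := by
    intro m hm2
    rcases eq_or_lt_of_le hm2 with h | h
    · subst h
      norm_num
      have h6 : (3:ℝ) * Real.log 6 = Real.log 216 := by
        rw [show (216:ℝ) = 6^(3:ℕ) by norm_num, Real.log_pow]; norm_num
      have h4 : (4:ℝ) * Real.log 4 = Real.log 256 := by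
        rw [show (256:ℝ) = 4^(4:ℕ) by norm_num, Real.log_pow]; norm_num
      have hmono : Real.log 216 ≤ Real.log 256 := by
        apply Real.log_le_log <;> norm_num
      linarith
    · have hx : (3:ℝ) ≤ (m:ℝ) := by exact_mod_cast h
      set x := (m:ℝ) with hxd
      have hx0 : (0:ℝ) < x := by linarith
      have h1 : Real.log (2*(x+1)) = Real.log (2*x) + Real.log ((x+1)/x) := by
        rw [← Real.log_mul (by positivity) (by positivity)]
        congr 1
        field_simp
      have h2 : Real.log ((x+1)/x) ≤ 1/x := by
        have hle := Real.log_le_sub_one_of_pos (show (0:ℝ) < (x+1)/x by positivity)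
        have heq : (x+1)/x - 1 = 1/x := by field_simp; ring
        linarith
      have h3 : Real.log 4 ≤ Real.log (2*x) := by
        apply Real.log_le_log (by norm_num)
        linarith
      have h5 : (x+1) * (1/x) ≤ Real.log (2*x) := by
        have hq : (x+1)*(1/x) ≤ 4/3 := by
          rw [mul_one_div, div_le_div_iff₀ hx0 (by norm_num)]
          linarith
        nlinarith
      have h6 : (x+1) * Real.log ((x+1)/x) ≤ (x+1) * (1/x) :=
        mul_le_mul_of_nonneg_left h2 (by linarith)
      calc (x+1) * Real.log (2*(x+1))
          = (x+1)*Real.log (2*x) + (x+1)*Real.log ((x+1)/x) := by rw [h1]; ring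
        _ ≤ (x+1)*Real.log (2*x) + Real.log (2*x) := by linarith
        _ = (x+2)*Real.log (2*x) := by ring
  have main : ∀ M : ℕ, 2 ≤ M →
      c * M * (Real.log (2*M) - e) / 2 - c * Real.log 2 / 6 ≤
        ∑ k ∈ Finset.Icc 1 M, (n k : ℝ) / ((k:ℝ)+1) := by
    intro M hM
    induction M, hM using Nat.le_induction with
    | base =>
      have h1 := hnF 1 (by norm_num)
      have h2 := hnF 2 (by norm_num)
      rw [show Finset.Icc 1 2 = ({1, 2} : Finset ℕ) by decide]
      rw [Finset.sum_insert (by decide), Finset.sum_singleton]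
      push_cast at h1 h2 ⊢
      norm_num at h1 h2 ⊢
      nlinarith [mul_nonneg hc_pos.le (neg_nonneg.mpr hlogε.le)]
    | succ m hm ih =>
      rw [Finset.sum_Icc_succ_top (by omega)]
      have hA := hnF (m+1) (by omega)
      have hkey := key m hm
      push_cast at hA ⊢
      set x := (m:ℝ) with hxd
      have hx2 : (2:ℝ) ≤ x := by rw [hxd]; exact_mod_cast hm
      set P := Real.log (2*(x+1)) - e with hP
      set Q := Real.log (2*x) - e with hQ
      have hPQ : (x+1) * P ≤ (x+2) * Q := by
        rw [hP, hQ]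
        nlinarith [hkey, hlogε]
      have hd2 : (0:ℝ) < x + 1 + 1 := by linarith
      have hstep : c*(x+1)*P/2 - c*x*Q/2 ≤ c*(x+1)*P/(x+1+1) := by
        rw [div_sub_div_same, div_le_div_iff₀ (by norm_num : (0:ℝ) < 2) hd2]
        nlinarith [mul_le_mul_of_nonneg_left hPQ
          (mul_nonneg hc_pos.le (by linarith : (0:ℝ) ≤ x))]
      have hdiv : c*(x+1)*P/(x+1+1) ≤ (n (m+1) : ℝ)/(x+1+1) := by
        gcongr
      linarith [ih, hstep, hdiv]
  rcases eq_or_lt_of_le hm with h1 | h2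
  · cases h1
    rw [Finset.Icc_self, Finset.sum_singleton]
    push_cast
    norm_num
    linarith
  · have hm2 : 2 ≤ m := h2
    have hmain := main m hm2
    have hup : (n m : ℝ) ≤ c*m*(Real.log (2*m) - e) + 1 := by
      rw [hn m hm]
      exact (Nat.ceil_lt_add_one (hFnn m hm)).le
    nlinarith [hmain, hup, hc2, hl2, hl2', hc_pos,
      mul_lt_mul_of_pos_left hl2 hc_pos]
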